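/- Let a > 0, a₁ > 0, c > 0, b ≥ 2, R > 0. Let h : ℂ → ℂ be differentiable with |h(u)| ≤ c·|u|^b and |h'(u)| ≤ c·|u|^{b-1} for all u ∈ ℂ, and let f : ℝ → ℂ be continuous with |f(t)| ≤ c·e^{-a₁·t} for all t ≥ 0. Assume c·(1 + 1/(a·R^b))·R ≤ 1 and c/(R^{b-1}·a) < 1. Then there exists a unique continuous function u : [0,∞) → ℂ with sup_{t≥0} |u(t)| ≤ 1/R satisfying u(t) = ∫₀ᵗ e^{-a(t-s)} h(u(s)) ds + f(t) for all t ≥ 0. -/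

import Mathlib

open Real Set intervalIntegral

lemma vh_exp_integral (a T : ℝ) (ha : 0 < a) :
    ∫ s in (0:ℝ)..T, Real.exp (-(a * (T - s))) ≤ 1 / a := by
  have h1 : (∫ s in (0:ℝ)..T, Real.exp (-(a * (T - s))))
      = ∫ x in (0:ℝ)..T, Real.exp (-(a * x)) := by
    have := intervalIntegral.integral_comp_sub_left (a := (0:ℝ)) (b := T)
      (fun x => Real.exp (-(a * x))) T
    simpa using this
  have h2 : (∫ x in (0:ℝ)..T, Real.exp (-(a * x)))
      = (1 - Real.exp (-(a * T))) / a := by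
    have := intervalIntegral.integral_comp_mul_left (a := (0:ℝ)) (b := T)
      (fun x => Real.exp x) (c := -a) (by linarith : -a ≠ 0)
    simp only [neg_mul, mul_zero, integral_exp, smul_eq_mul, Real.exp_zero] at this ⊢
    rw [this]
    have hane : a ≠ 0 := ne_of_gt ha
    field_simp
    ring
  rw [h1, h2]
  rw [div_le_div_iff₀ ha ha]
  nlinarith [Real.exp_pos (-(a*T))]

lemma vh_norm_integral_le (a T M : ℝ) (ha : 0 < a) (hT : 0 ≤ T) (hM : 0 ≤ M)
    (g : ℝ → ℂ) (hg : Continuous g) (hgM : ∀ s ∈ Icc (0:ℝ) T, ‖g s‖ ≤ M) :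
    ‖∫ s in (0:ℝ)..T, Real.exp (-(a * (T - s))) • g s‖ ≤ M / a := by
  have hc1 : Continuous fun s => Real.exp (-(a * (T - s))) := by continuity
  calc ‖∫ s in (0:ℝ)..T, Real.exp (-(a * (T - s))) • g s‖
      ≤ ∫ s in (0:ℝ)..T, ‖Real.exp (-(a * (T - s))) • g s‖ :=
        intervalIntegral.norm_integral_le_integral_norm hT
    _ ≤ ∫ s in (0:ℝ)..T, Real.exp (-(a * (T - s))) * M := by
        apply intervalIntegral.integral_mono_on hT
        · exact ((hc1.smul hg).norm).intervalIntegrable 0 T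
        · exact (hc1.mul continuous_const).intervalIntegrable 0 T
        · intro s hs
          rw [norm_smul, Real.norm_eq_abs, abs_of_pos (Real.exp_pos _)]
          exact mul_le_mul_of_nonneg_left (hgM s hs) (Real.exp_pos _).le
    _ = (∫ s in (0:ℝ)..T, Real.exp (-(a * (T - s)))) * M :=
        intervalIntegral.integral_mul_const _ _
    _ ≤ (1 / a) * M := mul_le_mul_of_nonneg_right (vh_exp_integral a T ha) hM
    _ = M / a := by ring

lemma vh_rewrite (a T : ℝ) (g : ℝ → ℂ) :
    Real.exp (-(a * T)) • (∫ s in (0:ℝ)..T, Real.exp (a * s) • g s)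
      = ∫ s in (0:ℝ)..T, Real.exp (-(a * (T - s))) • g s := by
  rw [← intervalIntegral.integral_smul]
  congr 1
  funext s
  rw [smul_smul, ← Real.exp_add]
  congr 2
  ring

/-- The Volterra–Hammerstein operator, in primitive form, extended to all of `ℝ`. -/
noncomputable def vhT (a : ℝ) (h : ℂ → ℂ) (f : ℝ → ℂ) (w : ℝ → ℂ) (t : ℝ) : ℂ :=
  Real.exp (-(a * max t 0)) • (∫ s in (0:ℝ)..(max t 0), Real.exp (a * s) • h (w s))
    + f (max t 0)

lemma vhT_eq (a : ℝ) (h : ℂ → ℂ) (f : ℝ → ℂ) (w : ℝ → ℂ) {t : ℝ} (ht : 0 ≤ t) :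
    vhT a h f w t = (∫ s in (0:ℝ)..t, Real.exp (-(a * (t - s))) • h (w s)) + f t := by
  have hmax : max t 0 = t := max_eq_left ht
  rw [vhT, hmax, vh_rewrite]

lemma vhT_cont (a : ℝ) (h : ℂ → ℂ) (f : ℝ → ℂ) (w : ℝ → ℂ)
    (hh : Continuous h) (hf : Continuous f) (hw : Continuous w) :
    Continuous (vhT a h f w) := by
  have hmax : Continuous (fun t : ℝ => max t 0) := continuous_id.max continuous_const
  have hint : Continuous (fun T : ℝ => ∫ s in (0:ℝ)..T, Real.exp (a * s) • h (w s)) := by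
    apply intervalIntegral.continuous_primitive
    intro x y
    exact (((Real.continuous_exp.comp (continuous_const.mul continuous_id)).smul
      (hh.comp hw))).intervalIntegrable x y
  exact ((Real.continuous_exp.comp ((continuous_const.mul hmax).neg)).smul
    (hint.comp hmax)).add (hf.comp hmax)

set_option maxHeartbeats 1000000 in
theorem existence_uniqueness_via_contraction
    (a a₁ c b R : ℝ) (ha : 0 < a) (ha₁ : 0 < a₁) (hc : 0 < c) (hb : 2 ≤ b) (hR : 0 < R)
    (h : ℂ → ℂ) (hh_diff : Differentiable ℂ h)
    (hh : ∀ z : ℂ, ‖h z‖ ≤ c * ‖z‖ ^ b)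
    (hh' : ∀ z : ℂ, ‖deriv h z‖ ≤ c * ‖z‖ ^ (b - 1))
    (f : ℝ → ℂ) (hf_cont : Continuous f)
    (hf : ∀ t ≥ (0:ℝ), ‖f t‖ ≤ c * Real.exp (-a₁ * t))
    (hsmall : c * (1 + 1 / (a * R ^ b)) * R ≤ 1)
    (hcontr : c / (R ^ (b - 1) * a) < 1) :
    ∃ u : ℝ → ℂ,
      (ContinuousOn u (Ici 0) ∧ (∀ t ≥ (0:ℝ), ‖u t‖ ≤ 1 / R) ∧
        ∀ t ≥ (0:ℝ), u t = (∫ s in (0:ℝ)..t, Real.exp (-(a * (t - s))) • h (u s)) + f t) ∧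
      ∀ v : ℝ → ℂ,
        (ContinuousOn v (Ici 0) ∧ (∀ t ≥ (0:ℝ), ‖v t‖ ≤ 1 / R) ∧
          ∀ t ≥ (0:ℝ), v t = (∫ s in (0:ℝ)..t, Real.exp (-(a * (t - s))) • h (v s)) + f t) →
        EqOn u v (Ici 0) := by
  have hcont_h : Continuous h := hh_diff.continuous
  set M : ℝ := 1 / R with hMdef
  have hM0 : 0 < M := by positivity
  have hb1 : (0:ℝ) ≤ b - 1 := by linarith
  have hPb : (0:ℝ) < R ^ b := Real.rpow_pos_of_pos hR b
  have hPb1 : (0:ℝ) < R ^ (b - 1) := Real.rpow_pos_of_pos hR (b - 1)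
  -- bound for h on the ball
  have hball : ∀ z : ℂ, ‖z‖ ≤ M → ‖h z‖ ≤ c * M ^ b := fun z hz =>
    (hh z).trans (mul_le_mul_of_nonneg_left
      (Real.rpow_le_rpow (norm_nonneg z) hz (by linarith)) hc.le)
  -- Lipschitz bound on the ball
  set L : ℝ := c * M ^ (b - 1) with hLdef
  have hL0 : 0 ≤ L := by positivity
  have hlip : ∀ z w : ℂ, ‖z‖ ≤ M → ‖w‖ ≤ M → ‖h z - h w‖ ≤ L * ‖z - w‖ := by
    intro z w hz hw
    refine (convex_closedBall (0:ℂ) M).norm_image_sub_le_of_norm_deriv_le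
      (fun x _ => hh_diff x) (fun x hx => ?_)
      (mem_closedBall_zero_iff.2 hw) (mem_closedBall_zero_iff.2 hz)
    exact (hh' x).trans (mul_le_mul_of_nonneg_left
      (Real.rpow_le_rpow (norm_nonneg x) (mem_closedBall_zero_iff.1 hx) hb1) hc.le)
  -- identification of constants
  have hMb : M ^ b = (R ^ b)⁻¹ := by
    rw [hMdef, one_div, Real.inv_rpow hR.le]
  have hMb1 : M ^ (b - 1) = (R ^ (b - 1))⁻¹ := by
    rw [hMdef, one_div, Real.inv_rpow hR.le]
  have hKeq : L / a = c / (R ^ (b - 1) * a) := by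
    rw [hLdef, hMb1]
    field_simp
  have hKlt : L / a < 1 := by rw [hKeq]; exact hcontr
  -- the self-map bound
  have hsum : c * M ^ b / a + c ≤ M := by
    have h1 : c * M ^ b / a + c = c * (1 + 1 / (a * R ^ b)) := by
      rw [hMb]; field_simp; ring
    rw [h1, hMdef, le_div_iff₀ hR]
    exact hsmall
  -- the ambient complete space and the closed ball
  set S : Set (BoundedContinuousFunction ℝ ℂ) := Metric.closedBall 0 M with hSdef
  haveI : CompleteSpace S := Metric.isClosed_closedBall.completeSpace_coe
  haveI : Nonempty S := ⟨⟨0, Metric.mem_closedBall_self hM0.le⟩⟩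
  have hmemS : ∀ u : BoundedContinuousFunction ℝ ℂ, u ∈ S → ∀ s, ‖u s‖ ≤ M := by
    intro u hu s
    exact (BoundedContinuousFunction.norm_coe_le_norm u s).trans
      (mem_closedBall_zero_iff.1 hu)
  -- the operator maps S into itself
  have hTbdd : ∀ w : ℝ → ℂ, Continuous w → (∀ s, ‖w s‖ ≤ M) → ∀ t, ‖vhT a h f w t‖ ≤ M := by
    intro w hwc hwb t
    have hT0 : (0:ℝ) ≤ max t 0 := le_max_right _ _
    rw [vhT, vh_rewrite]
    calc ‖(∫ s in (0:ℝ)..(max t 0), Real.exp (-(a * (max t 0 - s))) • h (w s)) + f (max t 0)‖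
        ≤ ‖∫ s in (0:ℝ)..(max t 0), Real.exp (-(a * (max t 0 - s))) • h (w s)‖ + ‖f (max t 0)‖ :=
          norm_add_le _ _
      _ ≤ c * M ^ b / a + c := by
          gcongr
          · exact vh_norm_integral_le a (max t 0) (c * M ^ b) ha hT0 (by positivity)
              (fun s => h (w s)) (hcont_h.comp hwc) (fun s _ => hball _ (hwb s))
          · refine (hf _ hT0).trans ?_
            have he : Real.exp (-a₁ * max t 0) ≤ 1 :=
              Real.exp_le_one_iff.2 (by nlinarith)
            nlinarith
      _ ≤ M := hsum
  -- the operator as a self-map of S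
  have hcontw : ∀ u : S, Continuous (⇑(u : BoundedContinuousFunction ℝ ℂ)) :=
    fun u => (u : BoundedContinuousFunction ℝ ℂ).continuous
  set Fmap : S → S := fun u =>
    ⟨BoundedContinuousFunction.ofNormedAddCommGroup
        (vhT a h f ⇑(u : BoundedContinuousFunction ℝ ℂ))
        (vhT_cont a h f _ hcont_h hf_cont (hcontw u)) M
        (hTbdd _ (hcontw u) (hmemS _ u.2)),
      mem_closedBall_zero_iff.2 ((BoundedContinuousFunction.norm_le hM0.le).2
        (hTbdd _ (hcontw u) (hmemS _ u.2)))⟩ with hFdef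
  have hFapp : ∀ (u : S) (t : ℝ),
      ((Fmap u : S) : BoundedContinuousFunction ℝ ℂ) t
        = vhT a h f (⇑(u : BoundedContinuousFunction ℝ ℂ)) t := fun u t => rfl
  -- contraction property
  set K : NNReal := ⟨L / a, div_nonneg hL0 ha.le⟩ with hKdef
  have hCW : ContractingWith K Fmap := by
    constructor
    · rw [← NNReal.coe_lt_one]
      exact hKlt
    · refine LipschitzWith.of_dist_le_mul fun u v => ?_
      rw [Subtype.dist_eq, Subtype.dist_eq]
      have hnn : (0:ℝ) ≤ (K : ℝ) * dist (u : BoundedContinuousFunction ℝ ℂ) v := by positivity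
      refine (BoundedContinuousFunction.dist_le hnn).2 fun t => ?_
      rw [dist_eq_norm, hFapp, hFapp]
      have hT0 : (0:ℝ) ≤ max t 0 := le_max_right _ _
      have hcu : Continuous fun s => h ((u : BoundedContinuousFunction ℝ ℂ) s) :=
        hcont_h.comp (hcontw u)
      have hcv : Continuous fun s => h ((v : BoundedContinuousFunction ℝ ℂ) s) :=
        hcont_h.comp (hcontw v)
      have hce : Continuous fun s : ℝ => Real.exp (-(a * (max t 0 - s))) :=
        Real.continuous_exp.comp ((continuous_const.mul (continuous_const.sub continuous_id)).neg)
      have hdiff_int :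
          vhT a h f (⇑(u : BoundedContinuousFunction ℝ ℂ)) t
            - vhT a h f (⇑(v : BoundedContinuousFunction ℝ ℂ)) t
          = ∫ s in (0:ℝ)..(max t 0), Real.exp (-(a * (max t 0 - s))) •
              (h ((u : BoundedContinuousFunction ℝ ℂ) s)
                - h ((v : BoundedContinuousFunction ℝ ℂ) s)) := by
        rw [vhT, vhT, vh_rewrite, vh_rewrite, add_sub_add_right_eq_sub]
        rw [← intervalIntegral.integral_sub
          (f := fun s => Real.exp (-(a * (max t 0 - s))) • h ((u : BoundedContinuousFunction ℝ ℂ) s))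
          (g := fun s => Real.exp (-(a * (max t 0 - s))) • h ((v : BoundedContinuousFunction ℝ ℂ) s))
          ((hce.smul hcu).intervalIntegrable 0 (max t 0))
          ((hce.smul hcv).intervalIntegrable 0 (max t 0))]
        simp only [smul_sub]
      rw [hdiff_int]
      have hbnd : ∀ s ∈ Icc (0:ℝ) (max t 0),
          ‖h ((u : BoundedContinuousFunction ℝ ℂ) s)
            - h ((v : BoundedContinuousFunction ℝ ℂ) s)‖
          ≤ L * dist (u : BoundedContinuousFunction ℝ ℂ) v := by
        intro s _
        refine (hlip _ _ (hmemS _ u.2 s) (hmemS _ v.2 s)).trans ?_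
        refine mul_le_mul_of_nonneg_left ?_ hL0
        rw [← dist_eq_norm]
        exact BoundedContinuousFunction.dist_coe_le_dist s
      have hmain := vh_norm_integral_le a (max t 0)
        (L * dist (u : BoundedContinuousFunction ℝ ℂ) v)
        ha hT0 (by positivity) _ (hcu.sub hcv) hbnd
      refine hmain.trans (le_of_eq ?_)
      rw [hKdef]
      push_cast
      show L * dist _ _ / a = (L / a) * dist _ _
      ring
  -- the fixed point
  set u₀ : S := ContractingWith.fixedPoint Fmap hCW with hu₀def
  have hfix : Fmap u₀ = u₀ := hCW.fixedPoint_isFixedPt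
  set u : ℝ → ℂ := ⇑((u₀ : S) : BoundedContinuousFunction ℝ ℂ) with hudef
  have hu_eq : ∀ t, u t = vhT a h f u t := by
    intro t
    have h2 := congrArg (fun w : S => ((w : BoundedContinuousFunction ℝ ℂ)) t) hfix
    exact h2.symm.trans (hFapp u₀ t)
  refine ⟨u, ⟨((u₀ : S) : BoundedContinuousFunction ℝ ℂ).continuous.continuousOn,
    fun t _ => hmemS _ u₀.2 t, fun t ht => ?_⟩, ?_⟩
  · rw [hu_eq t, vhT_eq a h f u ht]
  -- uniqueness
  rintro v ⟨hvc, hvb, hveq⟩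
  set vext : ℝ → ℂ := fun t => v (max t 0) with hvextdef
  have hvext_cont : Continuous vext :=
    hvc.comp_continuous (continuous_id.max continuous_const) (fun t => le_max_right t 0)
  have hvext_bdd : ∀ t, ‖vext t‖ ≤ M := fun t => hvb _ (le_max_right t 0)
  set vB : BoundedContinuousFunction ℝ ℂ :=
    BoundedContinuousFunction.ofNormedAddCommGroup vext hvext_cont M hvext_bdd with hvBdef
  have hvS : vB ∈ S := mem_closedBall_zero_iff.2
    ((BoundedContinuousFunction.norm_le hM0.le).2 hvext_bdd)
  have hfixv : Fmap ⟨vB, hvS⟩ = ⟨vB, hvS⟩ := by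
    refine Subtype.ext (BoundedContinuousFunction.ext fun t => ?_)
    rw [hFapp]
    have hT0 : (0:ℝ) ≤ max t 0 := le_max_right _ _
    have hcongr : (∫ s in (0:ℝ)..(max t 0), Real.exp (a * s) • h (vB s))
        = ∫ s in (0:ℝ)..(max t 0), Real.exp (a * s) • h (v s) := by
      apply intervalIntegral.integral_congr
      intro s hs
      rw [uIcc_of_le hT0] at hs
      have hss : vB s = v s := by
        show vext s = v s
        rw [hvextdef]
        simp only [max_eq_left hs.1]
      simp only [hss]
    rw [vhT]
    show Real.exp (-(a * max t 0)) •
        (∫ s in (0:ℝ)..(max t 0), Real.exp (a * s) • h (vB s)) + f (max t 0)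
      = (vB : ℝ → ℂ) t
    rw [hcongr, vh_rewrite]
    have hv := hveq (max t 0) hT0
    show (∫ s in (0:ℝ)..(max t 0), Real.exp (-(a * (max t 0 - s))) • h (v s)) + f (max t 0)
      = (vB : ℝ → ℂ) t
    rw [← hv]
    rfl
  have huv : (⟨vB, hvS⟩ : S) = u₀ := hCW.fixedPoint_unique hfixv
  intro t ht
  have h1 : u t = (vB : ℝ → ℂ) t :=
    congrArg (fun w : S => ((w : BoundedContinuousFunction ℝ ℂ)) t) huv.symm
  rw [h1]
  show vext t = v t
  rw [hvextdef]
  simp only [max_eq_left (mem_Ici.1 ht)]
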